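/- Let A, B be SPD, λ₁ < λ₂ ≤ ... ≤ λₙ the eigenvalues of A, ν_min, ν_max the extreme eigenvalues of AB⁻¹, κ_ν = ν_max/ν_min. Let u* be the unit eigenvector of A for λ₁, x* = B^{1/2}u*/‖B^{1/2}u*‖, and f(x) = −(xᵀB⁻¹x)/(xᵀB^{-1/2}AB^{-1/2}x). Then for every unit vector x with xᵀx* ≥ 0: f(x) − f(x*) ≥ μ₀/2 · dist²(x,x*), where μ₀ = 8(λ₁⁻¹ − λ₂⁻¹)/(π²κ_ν) and dist(x,x*) = arccos(xᵀx*). -/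

import Mathlib

open Matrix

private lemma dot_symm_aux {n : ℕ} {M : Matrix (Fin n) (Fin n) ℝ} (hM : Mᵀ = M)
    (v w : Fin n → ℝ) : (M *ᵥ v) ⬝ᵥ w = v ⬝ᵥ M *ᵥ w := by
  rw [Matrix.dotProduct_mulVec, ← Matrix.mulVec_transpose, hM, dotProduct_comm]

set_option maxHeartbeats 2000000 in
theorem stmt_12 {n : ℕ} (A B S R : Matrix (Fin n) (Fin n) ℝ)
    (hA : A.PosDef) (hB : B.PosDef)
    (hS : S.PosDef) (hSB : S * S = B)
    (hR : R.PosDef) (hRB : R * R = B⁻¹)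
    (lam₁ lam₂ : ℝ) (hlam₁ : 0 < lam₁) (hgap : lam₁ < lam₂)
    (u : Fin n → ℝ) (hu : u ⬝ᵥ u = 1) (hAu : A.mulVec u = lam₁ • u)
    (hmin : ∀ y : Fin n → ℝ, lam₁ * (y ⬝ᵥ y) ≤ y ⬝ᵥ A.mulVec y)
    (hsecond : ∀ y : Fin n → ℝ, y ⬝ᵥ u = 0 → lam₂ * (y ⬝ᵥ y) ≤ y ⬝ᵥ A.mulVec y)
    (νmin νmax : ℝ) (hνmin : 0 < νmin) (hνmax : 0 < νmax)
    (hspec : ∀ y : Fin n → ℝ,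
      νmin * (y ⬝ᵥ B.mulVec y) ≤ y ⬝ᵥ A.mulVec y ∧
        y ⬝ᵥ A.mulVec y ≤ νmax * (y ⬝ᵥ B.mulVec y))
    (xstar : Fin n → ℝ)
    (hxstar : xstar = (Real.sqrt (u ⬝ᵥ B.mulVec u))⁻¹ • S.mulVec u)
    (x : Fin n → ℝ) (hx : x ⬝ᵥ x = 1) (hxx : 0 ≤ x ⬝ᵥ xstar)
    (f fstar μ₀ : ℝ)
    (hf : f = -(x ⬝ᵥ B⁻¹.mulVec x) / (x ⬝ᵥ (R * A * R).mulVec x))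
    (hfstar : fstar = -1 / lam₁)
    (hμ₀ : μ₀ = 8 * (1 / lam₁ - 1 / lam₂) / (Real.pi ^ 2 * (νmax / νmin))) :
    f - fstar ≥ μ₀ / 2 * (Real.arccos (x ⬝ᵥ xstar)) ^ 2 := by
  have hlam₂ : 0 < lam₂ := hlam₁.trans hgap
  -- symmetry facts
  have hAs : Aᵀ = A := hA.1
  have hBs : Bᵀ = B := hB.1
  have hSs : Sᵀ = S := hS.1
  have hRs : Rᵀ = R := hR.1
  -- S = R⁻¹ by uniqueness of the positive square root
  have hRdet : IsUnit R.det := isUnit_iff_ne_zero.mpr hR.det_pos.ne'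
  have hBdet : IsUnit B.det := isUnit_iff_ne_zero.mpr hB.det_pos.ne'
  have hSRinv : S = R⁻¹ := by
    refine (open scoped MatrixOrder in (CFC.sq_eq_sq_iff S R⁻¹ hS.posSemidef.nonneg hR.inv.posSemidef.nonneg)).mp ?_
    rw [pow_two, pow_two, hSB, ← Matrix.mul_inv_rev, hRB,
      Matrix.nonsing_inv_nonsing_inv _ hBdet]
  have hRS1 : R * S = 1 := by rw [hSRinv, Matrix.mul_nonsing_inv _ hRdet]
  have hSR1 : S * R = 1 := by rw [hSRinv, Matrix.nonsing_inv_mul _ hRdet]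
  have hBRmat : B * R = S := by rw [← hSB, Matrix.mul_assoc, hSR1, Matrix.mul_one]
  have hRBmat : R * B = S := by rw [← hSB, ← Matrix.mul_assoc, hRS1, Matrix.one_mul]
  have hRBR : R * B * R = 1 := by rw [hRBmat, hSR1]
  -- basic positivity
  have hune : u ≠ 0 := by intro h; rw [h] at hu; simp at hu
  have huBu : 0 < u ⬝ᵥ B *ᵥ u := by
    have := hB.dotProduct_mulVec_pos hune; simpa using this
  set β : ℝ := Real.sqrt (u ⬝ᵥ B.mulVec u) with hβdef
  clear_value β
  have hβpos : 0 < β := by rw [hβdef]; exact Real.sqrt_pos.mpr huBu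
  have hβsq : β ^ 2 = u ⬝ᵥ B *ᵥ u := by rw [hβdef]; exact Real.sq_sqrt huBu.le
  set c : ℝ := x ⬝ᵥ xstar with hcdef
  clear_value c
  set y : Fin n → ℝ := R *ᵥ x with hydef
  clear_value y
  -- quadratic form transfers
  have hyBy : y ⬝ᵥ B *ᵥ y = 1 := by
    rw [hydef, dot_symm_aux hRs, Matrix.mulVec_mulVec, Matrix.mulVec_mulVec, hRBR,
      Matrix.one_mulVec, hx]
  have hyy : y ⬝ᵥ y = x ⬝ᵥ B⁻¹ *ᵥ x := by
    rw [hydef, dot_symm_aux hRs, Matrix.mulVec_mulVec, hRB]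
  have hyAy : y ⬝ᵥ A *ᵥ y = x ⬝ᵥ (R * A * R) *ᵥ x := by
    rw [hydef, dot_symm_aux hRs, Matrix.mulVec_mulVec, Matrix.mulVec_mulVec]
  -- xstar is a unit vector
  have hSuSu : (S *ᵥ u) ⬝ᵥ (S *ᵥ u) = u ⬝ᵥ B *ᵥ u := by
    rw [dot_symm_aux hSs, Matrix.mulVec_mulVec, hSB]
  have hxstar1 : xstar ⬝ᵥ xstar = 1 := by
    rw [hxstar, smul_dotProduct, dotProduct_smul, smul_eq_mul, smul_eq_mul, hSuSu, ← hβsq]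
    field_simp
  -- c ≤ 1 by Cauchy-Schwarz
  have hc1 : c ≤ 1 := by
    have hcs := Finset.sum_mul_sq_le_sq_mul_sq Finset.univ x xstar
    have hx2 : ∑ i, x i ^ 2 = 1 := by simpa [dotProduct, pow_two] using hx
    have hxs2 : ∑ i, xstar i ^ 2 = 1 := by simpa [dotProduct, pow_two] using hxstar1
    rw [hx2, hxs2, one_mul] at hcs
    have hcsq : c ^ 2 ≤ 1 := by simpa [hcdef, dotProduct, pow_two] using hcs
    nlinarith only [hcsq, hxx]
  -- u B y = β * c
  have huBy : u ⬝ᵥ B *ᵥ y = β * c := by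
    have h1 : u ⬝ᵥ B *ᵥ y = (S *ᵥ u) ⬝ᵥ x := by
      rw [hydef, Matrix.mulVec_mulVec, hBRmat, ← dot_symm_aux hSs]
    have h2 : c = β⁻¹ * ((S *ᵥ u) ⬝ᵥ x) := by
      rw [hcdef, hxstar, dotProduct_comm, smul_dotProduct, smul_eq_mul,
        dotProduct_comm]
    rw [h1, h2]; field_simp
  -- orthogonal decomposition
  set α : ℝ := y ⬝ᵥ u with hαdef
  clear_value α
  set w : Fin n → ℝ := y - α • u with hwdef
  clear_value w
  have hwu : w ⬝ᵥ u = 0 := by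
    rw [hwdef, sub_dotProduct, smul_dotProduct, hu, smul_eq_mul, mul_one, hαdef, sub_self]
  have huw : u ⬝ᵥ w = 0 := by rw [dotProduct_comm]; exact hwu
  have hyw : y = w + α • u := by rw [hwdef]; abel
  have huAw : u ⬝ᵥ A *ᵥ w = 0 := by
    rw [← dot_symm_aux hAs, hAu, smul_dotProduct, huw, smul_eq_mul, mul_zero]
  have hwAu : w ⬝ᵥ A *ᵥ u = 0 := by
    rw [hAu, dotProduct_smul, hwu, smul_eq_mul, mul_zero]
  have huAu : u ⬝ᵥ A *ᵥ u = lam₁ := by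
    rw [hAu, dotProduct_smul, hu, smul_eq_mul, mul_one]
  have hyAy' : y ⬝ᵥ A *ᵥ y = w ⬝ᵥ A *ᵥ w + lam₁ * α ^ 2 := by
    rw [hyw]
    simp only [Matrix.mulVec_add, Matrix.mulVec_smul, dotProduct_add, add_dotProduct,
      dotProduct_smul, smul_dotProduct, smul_eq_mul, huAw, hwAu, huAu]
    ring
  have hyy' : y ⬝ᵥ y = w ⬝ᵥ w + α ^ 2 := by
    rw [hyw]
    simp only [dotProduct_add, add_dotProduct, dotProduct_smul, smul_dotProduct, smul_eq_mul,
      huw, hwu, hu]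
    ring
  -- w B w
  have hyBu : y ⬝ᵥ B *ᵥ u = β * c := by
    rw [← dot_symm_aux hBs, dotProduct_comm]; exact huBy
  have hwBw : w ⬝ᵥ B *ᵥ w = 1 - 2 * α * β * c + α ^ 2 * β ^ 2 := by
    rw [hwdef]
    simp only [Matrix.mulVec_sub, Matrix.mulVec_smul, dotProduct_sub, sub_dotProduct,
      dotProduct_smul, smul_dotProduct, smul_eq_mul, hyBy, huBy, hyBu, ← hβsq]
    ring
  have hwBw_ge : 1 - c ^ 2 ≤ w ⬝ᵥ B *ᵥ w := by
    rw [hwBw]; nlinarith only [sq_nonneg (α * β - c)]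
  -- inequalities on quadratic forms
  have hww_nonneg : 0 ≤ w ⬝ᵥ w := by
    simpa [dotProduct] using Finset.sum_nonneg fun i _ => mul_self_nonneg (w i)
  have hwAw_lb : νmin * (w ⬝ᵥ B *ᵥ w) ≤ w ⬝ᵥ A *ᵥ w := (hspec w).1
  have hwAw_nonneg : 0 ≤ w ⬝ᵥ A *ᵥ w :=
    le_trans (mul_nonneg hlam₁.le hww_nonneg) (hmin w)
  have hw2 : lam₂ * (w ⬝ᵥ w) ≤ w ⬝ᵥ A *ᵥ w := hsecond w hwu
  set D : ℝ := y ⬝ᵥ A *ᵥ y with hDdef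
  clear_value D
  have hDpos : 0 < D := by
    have h := (hspec y).1
    rw [hyBy, mul_one, ← hDdef] at h
    exact lt_of_lt_of_le hνmin h
  have hDle : D ≤ νmax := by
    have h := (hspec y).2
    rw [hyBy, mul_one, ← hDdef] at h
    exact h
  have hc2 : 0 ≤ 1 - c ^ 2 := by nlinarith only [hc1, hxx]
  have hfac : 0 ≤ 1 / lam₁ - 1 / lam₂ := by
    rw [sub_nonneg]; exact one_div_le_one_div_of_le hlam₁ hgap.le
  -- f - fstar = (D / lam₁ - y⬝y) / D
  have hfval : f = -(y ⬝ᵥ y) / D := by rw [hf, ← hyy, ← hyAy]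
  have hfs : f - fstar = (D / lam₁ - y ⬝ᵥ y) / D := by
    rw [hfval, hfstar]
    field_simp
    ring
  have hNlb : (1 / lam₁ - 1 / lam₂) * (νmin * (1 - c ^ 2)) ≤ D / lam₁ - y ⬝ᵥ y := by
    have hN : D / lam₁ - y ⬝ᵥ y = w ⬝ᵥ A *ᵥ w / lam₁ - w ⬝ᵥ w := by
      rw [hyAy', hyy']; field_simp; ring
    rw [hN]
    have h1 : w ⬝ᵥ w ≤ w ⬝ᵥ A *ᵥ w / lam₂ := by rw [le_div_iff₀ hlam₂]; linarith
    have h2 : (1 / lam₁ - 1 / lam₂) * (w ⬝ᵥ A *ᵥ w) ≤ w ⬝ᵥ A *ᵥ w / lam₁ - w ⬝ᵥ w := by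
      have h3 : w ⬝ᵥ A *ᵥ w / lam₁ - w ⬝ᵥ A *ᵥ w / lam₂
          = (1 / lam₁ - 1 / lam₂) * (w ⬝ᵥ A *ᵥ w) := by ring
      linarith
    have h3 : νmin * (1 - c ^ 2) ≤ w ⬝ᵥ A *ᵥ w :=
      le_trans (mul_le_mul_of_nonneg_left hwBw_ge hνmin.le) hwAw_lb
    calc (1 / lam₁ - 1 / lam₂) * (νmin * (1 - c ^ 2))
        ≤ (1 / lam₁ - 1 / lam₂) * (w ⬝ᵥ A *ᵥ w) := mul_le_mul_of_nonneg_left h3 hfac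
      _ ≤ w ⬝ᵥ A *ᵥ w / lam₁ - w ⬝ᵥ w := h2
  have hNnonneg : 0 ≤ D / lam₁ - y ⬝ᵥ y :=
    le_trans (by positivity) hNlb
  have hmain : (1 / lam₁ - 1 / lam₂) * (νmin / νmax) * (1 - c ^ 2) ≤ f - fstar := by
    rw [hfs]
    calc (1 / lam₁ - 1 / lam₂) * (νmin / νmax) * (1 - c ^ 2)
        = ((1 / lam₁ - 1 / lam₂) * (νmin * (1 - c ^ 2))) / νmax := by field_simp
      _ ≤ (D / lam₁ - y ⬝ᵥ y) / νmax := by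
          exact (div_le_div_iff_of_pos_right hνmax).mpr hNlb
      _ ≤ (D / lam₁ - y ⬝ᵥ y) / D := by
          exact div_le_div_of_nonneg_left hNnonneg hDpos hDle
  -- angle estimate
  set θ : ℝ := Real.arccos c with hθdef
  clear_value θ
  have hθ0 : 0 ≤ θ := hθdef ▸ Real.arccos_nonneg c
  have hθπ : θ ≤ Real.pi / 2 := hθdef ▸ Real.arccos_le_pi_div_two.mpr hxx
  have hπ : (0:ℝ) < Real.pi := Real.pi_pos
  have hsin : 2 / Real.pi * θ ≤ Real.sin θ := Real.mul_le_sin hθ0 hθπ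
  have hsinθ : Real.sin θ = Real.sqrt (1 - c ^ 2) := hθdef ▸ Real.sin_arccos c
  have hab : 2 * θ ≤ Real.sqrt (1 - c ^ 2) * Real.pi := by
    rw [hsinθ] at hsin
    calc 2 * θ = (2 / Real.pi * θ) * Real.pi := by field_simp
      _ ≤ Real.sqrt (1 - c ^ 2) * Real.pi := by
          exact mul_le_mul_of_nonneg_right hsin hπ.le
  have hθsq : 4 * θ ^ 2 ≤ (1 - c ^ 2) * Real.pi ^ 2 := by
    have h1 := mul_self_le_mul_self (by positivity : (0:ℝ) ≤ 2 * θ) hab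
    have h2 := Real.sq_sqrt hc2
    have h3 : Real.sqrt (1 - c ^ 2) ^ 2 * Real.pi ^ 2 = (1 - c ^ 2) * Real.pi ^ 2 := by
      rw [h2]
    nlinarith only [h1, h3]
  have hK : 0 ≤ (1 / lam₁ - 1 / lam₂) * (νmin / νmax) :=
    mul_nonneg hfac (by positivity)
  have heq : μ₀ * Real.pi ^ 2 = 8 * ((1 / lam₁ - 1 / lam₂) * (νmin / νmax)) := by
    rw [hμ₀]
    field_simp
  have hgoal : μ₀ / 2 * θ ^ 2 ≤ (1 / lam₁ - 1 / lam₂) * (νmin / νmax) * (1 - c ^ 2) := by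
    have hπ2 : (0:ℝ) < Real.pi ^ 2 := by positivity
    have h4 : μ₀ * Real.pi ^ 2 * θ ^ 2 = 8 * ((1 / lam₁ - 1 / lam₂) * (νmin / νmax)) * θ ^ 2 := by
      rw [heq]
    nlinarith only [mul_le_mul_of_nonneg_left hθsq hK, h4, hπ2]
  exact le_trans hgoal hmain
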